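/- For integers $l \ge 2$, $N \ge 2$ and real $v$ with $1 < v < l/(l-1)$, there exist constants $c_1, c_2 > 0$ depending only on $l$ and $v$ such that $c_1 N^l \le \sum_{k=0}^{N-1} \left( \frac{N^v - (k+1)^v}{(k+1)^v - k^v} \right)^{l-1} + 1 \le c_2 N^l$. -/

import Mathlib

set_option maxHeartbeats 1000000

open Real Finset

/-- Bernoulli: for `1 ≤ v` and `1 ≤ k`: `v * k^(v-1) ≤ (k+1)^v - k^v`. -/
lemma ccs_h_lower (v : ℝ) (hv : 1 ≤ v) {k : ℝ} (hk : 1 ≤ k) :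
    v * k ^ (v - 1) ≤ (k + 1) ^ v - k ^ v := by
  have hk0 : (0:ℝ) < k := lt_of_lt_of_le one_pos hk
  have hs' : (-1:ℝ) ≤ 1 / k := le_trans (by norm_num : (-1:ℝ) ≤ 0) (by positivity)
  have hB : 1 + v * (1 / k) ≤ (1 + 1 / k) ^ v :=
    one_add_mul_self_le_rpow_one_add hs' hv
  have hmul : k ^ v * (1 + v * (1 / k)) ≤ k ^ v * (1 + 1 / k) ^ v :=
    mul_le_mul_of_nonneg_left hB (rpow_nonneg hk0.le v)
  have h1 : k ^ v * (1 + 1 / k) ^ v = (k + 1) ^ v := by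
    rw [← mul_rpow hk0.le (by positivity)]
    congr 1; field_simp
  have h2 : k ^ (v - 1) = k ^ v / k := by
    rw [rpow_sub hk0, rpow_one]
  rw [h1] at hmul
  rw [h2]
  have h3 : k ^ v * (1 + v * (1 / k)) = k ^ v + v * (k ^ v / k) := by
    field_simp
  nlinarith [hmul, h3]

/-- Bernoulli: for `1 ≤ v` and `0 ≤ k`: `(k+1)^v - k^v ≤ v * (k+1)^(v-1)`. -/
lemma ccs_h_upper (v : ℝ) (hv : 1 ≤ v) {k : ℝ} (hk : 0 ≤ k) :
    (k + 1) ^ v - k ^ v ≤ v * (k + 1) ^ (v - 1) := by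
  set K : ℝ := k + 1 with hK
  have hK1 : (1:ℝ) ≤ K := by simp only [hK]; linarith
  have hK0 : (0:ℝ) < K := lt_of_lt_of_le one_pos hK1
  have hinv : 1 / K ≤ 1 := by rw [div_le_one hK0]; exact hK1
  have hB : 1 + v * (-(1 / K)) ≤ (1 + -(1 / K)) ^ v :=
    one_add_mul_self_le_rpow_one_add (by linarith) hv
  have hmul : K ^ v * (1 + v * (-(1 / K))) ≤ K ^ v * (1 + -(1 / K)) ^ v :=
    mul_le_mul_of_nonneg_left hB (rpow_nonneg hK0.le v)
  have h1 : K ^ v * (1 + -(1 / K)) ^ v = k ^ v := by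
    rw [← mul_rpow hK0.le (by linarith)]
    congr 1; field_simp; simp only [hK]; ring
  have h2 : K ^ (v - 1) = K ^ v / K := by rw [rpow_sub hK0, rpow_one]
  rw [h1] at hmul
  rw [h2]
  have h3 : K ^ v * (1 + v * (-(1 / K))) = K ^ v - v * (K ^ v / K) := by
    field_simp; ring
  nlinarith [hmul, h3]

/-- Concave increment bound: for `0 ≤ p ≤ 1`, `0 ≤ k`:
`p * (k+1)^(p-1) ≤ (k+1)^p - k^p`. -/
lemma ccs_incr_lower (p : ℝ) (hp0 : 0 ≤ p) (hp1 : p ≤ 1) {k : ℝ} (hk : 0 ≤ k) :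
    p * (k + 1) ^ (p - 1) ≤ (k + 1) ^ p - k ^ p := by
  set K : ℝ := k + 1 with hK
  have hK1 : (1:ℝ) ≤ K := by simp only [hK]; linarith
  have hK0 : (0:ℝ) < K := lt_of_lt_of_le one_pos hK1
  have hinv : 1 / K ≤ 1 := by rw [div_le_one hK0]; exact hK1
  have hB : (1 + -(1 / K)) ^ p ≤ 1 + p * (-(1 / K)) :=
    rpow_one_add_le_one_add_mul_self (by linarith) hp0 hp1
  have hmul : K ^ p * (1 + -(1 / K)) ^ p ≤ K ^ p * (1 + p * (-(1 / K))) :=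
    mul_le_mul_of_nonneg_left hB (rpow_nonneg hK0.le p)
  have h1 : K ^ p * (1 + -(1 / K)) ^ p = k ^ p := by
    rw [← mul_rpow hK0.le (by linarith)]
    congr 1; field_simp; simp only [hK]; ring
  have h2 : K ^ (p - 1) = K ^ p / K := by rw [rpow_sub hK0, rpow_one]
  rw [h1] at hmul
  rw [h2]
  have h3 : K ^ p * (1 + p * (-(1 / K))) = K ^ p - p * (K ^ p / K) := by
    field_simp; ring
  nlinarith [hmul, h3]

/-- Partial sums of `(k+1)^(-s)` for `0 < s < 1`. -/
lemma ccs_sum_rpow (s : ℝ) (hs0 : 0 < s) (hs1 : s < 1) (M : ℕ) :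
    ∑ k ∈ Finset.range M, ((k : ℝ) + 1) ^ (-s) ≤ 2 / (1 - s) * ((M : ℝ) + 1) ^ (1 - s) := by
  have h1s : (0:ℝ) < 1 - s := by linarith
  set f : ℕ → ℝ := fun k => 2 / (1 - s) * ((k : ℝ) + 1) ^ (1 - s) with hf
  have key : ∀ k : ℕ, ((k : ℝ) + 1) ^ (-s) ≤ f (k + 1) - f k := by
    intro k
    have hk0 : (0:ℝ) ≤ (k : ℝ) + 1 := by positivity
    have hkpos : (0:ℝ) < (k : ℝ) + 1 := by positivity
    have hincr := ccs_incr_lower (1 - s) h1s.le (by linarith) hk0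
    rw [show (1 - s) - 1 = -s by ring] at hincr
    have h2s : ((k : ℝ) + 1 + 1) ^ s ≤ 2 * ((k : ℝ) + 1) ^ s := by
      have hle : (k : ℝ) + 1 + 1 ≤ 2 * ((k : ℝ) + 1) := by
        have := Nat.cast_nonneg (α := ℝ) k; linarith
      calc ((k : ℝ) + 1 + 1) ^ s ≤ (2 * ((k : ℝ) + 1)) ^ s :=
            rpow_le_rpow (by positivity) hle hs0.le
        _ = 2 ^ s * ((k : ℝ) + 1) ^ s := mul_rpow (by norm_num) hk0
        _ ≤ 2 * ((k : ℝ) + 1) ^ s := by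
            have h21 : (2:ℝ) ^ s ≤ 2 ^ (1:ℝ) :=
              rpow_le_rpow_of_exponent_le (by norm_num) hs1.le
            rw [rpow_one] at h21
            exact mul_le_mul_of_nonneg_right h21 (rpow_nonneg hk0 s)
    have hhalf : (1/2 : ℝ) * ((k : ℝ) + 1) ^ (-s) ≤ ((k : ℝ) + 1 + 1) ^ (-s) := by
      rw [rpow_neg (by positivity : (0:ℝ) ≤ (k:ℝ)+1+1), rpow_neg hk0]
      rw [show (1/2 : ℝ) * (((k:ℝ)+1)^s)⁻¹ = (2 * ((k:ℝ)+1)^s)⁻¹ by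
        rw [mul_inv]; ring]
      exact inv_anti₀ (rpow_pos_of_pos (by positivity) s) h2s
    have hcast : f (k + 1) - f k
        = 2 / (1 - s) * (((k:ℝ) + 1 + 1) ^ (1 - s) - ((k:ℝ) + 1) ^ (1 - s)) := by
      simp only [hf]
      push_cast
      ring
    rw [hcast]
    have ht0 : (0:ℝ) ≤ ((k : ℝ) + 1) ^ (-s) := rpow_nonneg hk0 _
    have hdiv : 2 / (1 - s) * (1 - s) = 2 := div_mul_cancel₀ 2 h1s.ne'
    have hmul2 := mul_le_mul_of_nonneg_left hincr (by positivity : (0:ℝ) ≤ 2 / (1 - s))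
    have heq : 2 / (1 - s) * ((1 - s) * ((k:ℝ) + 1 + 1) ^ (-s)) = 2 * ((k:ℝ) + 1 + 1) ^ (-s) := by
      rw [← mul_assoc, hdiv]
    rw [heq] at hmul2
    linarith [hmul2, hhalf]
  calc ∑ k ∈ Finset.range M, ((k : ℝ) + 1) ^ (-s)
      ≤ ∑ k ∈ Finset.range M, (f (k + 1) - f k) :=
        Finset.sum_le_sum fun k _ => key k
    _ = f M - f 0 := Finset.sum_range_sub f M
    _ ≤ f M := by
        have : (0:ℝ) ≤ f 0 := by
          simp only [hf]
          positivity
        linarith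
    _ = 2 / (1 - s) * ((M : ℝ) + 1) ^ (1 - s) := rfl

theorem cell_count_subcritical (l : ℕ) (hl : 2 ≤ l) (v : ℝ) (hv1 : 1 < v)
    (hv2 : v < l / (l - 1 : ℝ)) :
    ∃ c₁ c₂ : ℝ, 0 < c₁ ∧ 0 < c₂ ∧ ∀ N : ℕ, 2 ≤ N →
      c₁ * (N : ℝ) ^ l ≤
        (∑ k ∈ Finset.range N,
          (((N : ℝ) ^ v - (k + 1 : ℝ) ^ v) / ((k + 1 : ℝ) ^ v - (k : ℝ) ^ v)) ^ (l - 1)) + 1 ∧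
      (∑ k ∈ Finset.range N,
          (((N : ℝ) ^ v - (k + 1 : ℝ) ^ v) / ((k + 1 : ℝ) ^ v - (k : ℝ) ^ v)) ^ (l - 1)) + 1
        ≤ c₂ * (N : ℝ) ^ l := by
  have hl2 : (2:ℝ) ≤ (l:ℝ) := by exact_mod_cast hl
  have hl1 : (1:ℝ) ≤ (l:ℝ) - 1 := by linarith
  have hlpos : (0:ℝ) < (l:ℝ) - 1 := by linarith
  have hv0 : (0:ℝ) < v := by linarith
  set m : ℕ := l - 1 with hm
  have hml : m + 1 = l := by omega
  have hmcast : ((m : ℕ) : ℝ) = (l:ℝ) - 1 := by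
    rw [hm, Nat.cast_sub (by omega : 1 ≤ l)]; norm_num
  set s : ℝ := (v - 1) * ((l:ℝ) - 1) with hs
  have hs0 : 0 < s := mul_pos (by linarith) hlpos
  have hvl : v * ((l:ℝ) - 1) < l := (lt_div_iff₀ hlpos).mp hv2
  have hs1 : s < 1 := by rw [hs]; nlinarith
  have h1s : (0:ℝ) < 1 - s := by linarith
  refine ⟨(1/4) * (1/(2*v))^m, 2/(1-s) + 2, by positivity, by positivity, ?_⟩
  intro N hN
  have hN2 : (2:ℝ) ≤ (N:ℝ) := by exact_mod_cast hN
  have hN1 : (1:ℝ) ≤ (N:ℝ) := by linarith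
  have hNpos : (0:ℝ) < (N:ℝ) := by linarith
  have hterm_nonneg : ∀ k ∈ Finset.range N,
      (0:ℝ) ≤ (((N : ℝ) ^ v - ((k:ℝ) + 1) ^ v) / (((k:ℝ) + 1) ^ v - (k : ℝ) ^ v)) ^ m := by
    intro k hk
    apply pow_nonneg
    apply div_nonneg
    · have hk1 : ((k:ℝ) + 1) ≤ (N:ℝ) := by
        have : k + 1 ≤ N := Finset.mem_range.mp hk
        exact_mod_cast this
      exact sub_nonneg.2 (rpow_le_rpow (by positivity) hk1 hv0.le)
    · exact (sub_pos.2 (rpow_lt_rpow (Nat.cast_nonneg k) (by linarith) hv0)).le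
  constructor
  · -- lower bound
    have hstep : ∀ k ∈ Finset.range (N/2), ((N:ℝ)/(2*v))^m ≤
        (((N : ℝ) ^ v - ((k:ℝ) + 1) ^ v) / (((k:ℝ) + 1) ^ v - (k : ℝ) ^ v)) ^ m := by
      intro k hk
      have hk2 : k + 1 ≤ N/2 := Finset.mem_range.mp hk
      have hk2R : ((k:ℝ) + 1) ≤ (N:ℝ)/2 := by
        calc ((k:ℝ) + 1) = ((k + 1 : ℕ) : ℝ) := by push_cast; ring
          _ ≤ ((N/2 : ℕ) : ℝ) := by exact_mod_cast hk2
          _ ≤ (N:ℝ)/2 := Nat.cast_div_le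
      have hkN : ((k:ℝ) + 1) ≤ (N:ℝ) := le_trans hk2R (by linarith)
      have hnum : (N:ℝ)^v/2 ≤ (N:ℝ)^v - ((k:ℝ) + 1)^v := by
        have h1 : ((k:ℝ) + 1)^v ≤ ((N:ℝ)/2)^v := rpow_le_rpow (by positivity) hk2R hv0.le
        have h2 : ((N:ℝ)/2)^v = (N:ℝ)^v / 2^v := div_rpow (by positivity) (by norm_num) v
        have h3 : (2:ℝ) ≤ 2^v := by
          calc (2:ℝ) = 2^(1:ℝ) := (rpow_one 2).symm
            _ ≤ 2^v := rpow_le_rpow_of_exponent_le (by norm_num) hv1.le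
        have h4 : (N:ℝ)^v / 2^v ≤ (N:ℝ)^v / 2 := by
          apply div_le_div_of_nonneg_left (rpow_nonneg hNpos.le v) (by norm_num) h3
        rw [h2] at h1
        linarith
      have hden_pos : (0:ℝ) < ((k:ℝ) + 1)^v - (k:ℝ)^v :=
        sub_pos.2 (rpow_lt_rpow (Nat.cast_nonneg k) (by linarith) hv0)
      have hden : ((k:ℝ) + 1)^v - (k:ℝ)^v ≤ v * (N:ℝ)^(v-1) := by
        calc ((k:ℝ) + 1)^v - (k:ℝ)^v ≤ v * ((k:ℝ) + 1)^(v-1) :=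
              ccs_h_upper v hv1.le (Nat.cast_nonneg k)
          _ ≤ v * (N:ℝ)^(v-1) := by
              apply mul_le_mul_of_nonneg_left _ hv0.le
              exact rpow_le_rpow (by positivity) hkN (by linarith)
      have hNv : (N:ℝ)^v = (N:ℝ) * (N:ℝ)^(v-1) := by
        rw [show v = 1 + (v-1) by ring]
        rw [Real.rpow_add hNpos, rpow_one]
        ring_nf
      have hNv1pos : (0:ℝ) < (N:ℝ)^(v-1) := rpow_pos_of_pos hNpos _
      have hkey : ((N:ℝ)^v/2)/(v * (N:ℝ)^(v-1)) = (N:ℝ)/(2*v) := by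
        rw [hNv]; field_simp
      have hratio : (N:ℝ)/(2*v) ≤
          ((N : ℝ) ^ v - ((k:ℝ) + 1) ^ v) / (((k:ℝ) + 1) ^ v - (k : ℝ) ^ v) := by
        rw [← hkey]
        apply div_le_div₀ _ hnum hden_pos hden
        have : (0:ℝ) ≤ (N:ℝ)^v/2 := by positivity
        linarith
      exact pow_le_pow_left₀ (by positivity) hratio m
    have hcount : (N:ℝ)/4 ≤ ((N/2 : ℕ) : ℝ) := by
      have h1 : N ≤ 2 * (N/2) + 1 := by omega
      have h1R : (N:ℝ) ≤ 2 * ((N/2 : ℕ) : ℝ) + 1 := by exact_mod_cast h1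
      linarith
    have hc1 : (1/4) * (1/(2*v))^m * (N:ℝ)^l = ((N:ℝ)/4) * ((N:ℝ)/(2*v))^m := by
      rw [← hml, pow_succ, div_pow, div_pow, one_pow]
      have : ((2*v):ℝ)^m ≠ 0 := by positivity
      field_simp
    have hchain : (1/4) * (1/(2*v))^m * (N:ℝ)^l ≤
        ∑ k ∈ Finset.range N,
          (((N : ℝ) ^ v - ((k:ℝ) + 1) ^ v) / (((k:ℝ) + 1) ^ v - (k : ℝ) ^ v)) ^ m := by
      calc (1/4) * (1/(2*v))^m * (N:ℝ)^l = ((N:ℝ)/4) * ((N:ℝ)/(2*v))^m := hc1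
        _ ≤ ((N/2 : ℕ) : ℝ) * ((N:ℝ)/(2*v))^m :=
            mul_le_mul_of_nonneg_right hcount (by positivity)
        _ = ∑ _k ∈ Finset.range (N/2), ((N:ℝ)/(2*v))^m := by
            rw [Finset.sum_const, Finset.card_range, nsmul_eq_mul]
        _ ≤ ∑ k ∈ Finset.range (N/2),
            (((N : ℝ) ^ v - ((k:ℝ) + 1) ^ v) / (((k:ℝ) + 1) ^ v - (k : ℝ) ^ v)) ^ m :=
            Finset.sum_le_sum hstep
        _ ≤ ∑ k ∈ Finset.range N,
            (((N : ℝ) ^ v - ((k:ℝ) + 1) ^ v) / (((k:ℝ) + 1) ^ v - (k : ℝ) ^ v)) ^ m :=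
            Finset.sum_le_sum_of_subset_of_nonneg
              (Finset.range_subset_range.2 (by omega)) (fun k hk _ => hterm_nonneg k hk)
    linarith
  · -- upper bound
    set M : ℕ := N - 1 with hM
    have hMN : M + 1 = N := by omega
    have hsplit : ∑ k ∈ Finset.range N,
        (((N : ℝ) ^ v - ((k:ℝ) + 1) ^ v) / (((k:ℝ) + 1) ^ v - (k : ℝ) ^ v)) ^ m
        = (∑ k ∈ Finset.range M,
            (((N : ℝ) ^ v - (((k+1:ℕ):ℝ) + 1) ^ v) / ((((k+1:ℕ):ℝ) + 1) ^ v - ((k+1:ℕ) : ℝ) ^ v)) ^ m)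
          + (((N : ℝ) ^ v - (((0:ℕ):ℝ) + 1) ^ v) / ((((0:ℕ):ℝ) + 1) ^ v - ((0:ℕ) : ℝ) ^ v)) ^ m := by
      have h := Finset.sum_range_succ'
        (fun k => (((N : ℝ) ^ v - ((k:ℝ) + 1) ^ v) / (((k:ℝ) + 1) ^ v - (k : ℝ) ^ v)) ^ m) M
      rw [hMN] at h
      exact h
    have hNlcast : (N:ℝ)^((l:ℕ):ℝ) = (N:ℝ)^l := rpow_natCast _ l
    have hNv1 : (1:ℝ) ≤ (N:ℝ)^v := by
      calc (1:ℝ) = 1^v := (one_rpow v).symm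
        _ ≤ (N:ℝ)^v := rpow_le_rpow zero_le_one hN1 hv0.le
    have hf0 : (((N : ℝ) ^ v - (((0:ℕ):ℝ) + 1) ^ v) / ((((0:ℕ):ℝ) + 1) ^ v - ((0:ℕ) : ℝ) ^ v)) ^ m
        ≤ (N:ℝ)^l := by
      simp only [Nat.cast_zero, zero_add, one_rpow, Real.zero_rpow hv0.ne', sub_zero, div_one]
      calc ((N:ℝ)^v - 1)^m ≤ ((N:ℝ)^v)^m :=
            pow_le_pow_left₀ (by linarith) (by linarith) m
        _ = (N:ℝ)^(v * ((l:ℝ) - 1)) := by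
            rw [← rpow_natCast ((N:ℝ)^v) m, ← rpow_mul hNpos.le, hmcast]
        _ ≤ (N:ℝ)^((l:ℕ):ℝ) := rpow_le_rpow_of_exponent_le hN1 (by push_cast; nlinarith)
        _ = (N:ℝ)^l := hNlcast
    have hTk : ∀ k ∈ Finset.range M,
        (((N : ℝ) ^ v - (((k+1:ℕ):ℝ) + 1) ^ v) / ((((k+1:ℕ):ℝ) + 1) ^ v - ((k+1:ℕ) : ℝ) ^ v)) ^ m
        ≤ (N:ℝ)^(v * ((l:ℝ) - 1)) * ((k:ℝ) + 1)^(-s) := by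
      intro k hk
      have hkM : k < M := Finset.mem_range.mp hk
      have hk1pos : (0:ℝ) < (k:ℝ) + 1 := by positivity
      have hcast1 : ((k+1:ℕ):ℝ) = (k:ℝ) + 1 := by push_cast; ring
      rw [hcast1]
      have hnum_le : (N : ℝ) ^ v - ((k:ℝ) + 1 + 1) ^ v ≤ (N:ℝ)^v := by
        have : (0:ℝ) ≤ ((k:ℝ) + 1 + 1)^v := rpow_nonneg (by positivity) v
        linarith
      have hnum_nonneg : (0:ℝ) ≤ (N : ℝ) ^ v - ((k:ℝ) + 1 + 1) ^ v := by
        have hle : (k:ℝ) + 1 + 1 ≤ (N:ℝ) := by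
          have : k + 2 ≤ N := by omega
          have := (Nat.cast_le (α := ℝ)).mpr this
          push_cast at this
          linarith
        exact sub_nonneg.2 (rpow_le_rpow (by positivity) hle hv0.le)
      have hden_ge : ((k:ℝ) + 1)^(v-1) ≤ ((k:ℝ) + 1 + 1) ^ v - ((k:ℝ) + 1) ^ v := by
        have h1 : v * ((k:ℝ) + 1)^(v-1) ≤ ((k:ℝ) + 1 + 1) ^ v - ((k:ℝ) + 1) ^ v :=
          ccs_h_lower v hv1.le (by linarith [Nat.cast_nonneg (α := ℝ) k])
        have h2 : ((k:ℝ) + 1)^(v-1) ≤ v * ((k:ℝ) + 1)^(v-1) := by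
          nlinarith [rpow_pos_of_pos hk1pos (v-1)]
        linarith
      have hdpos : (0:ℝ) < ((k:ℝ) + 1)^(v-1) := rpow_pos_of_pos hk1pos _
      have hratio : ((N : ℝ) ^ v - ((k:ℝ) + 1 + 1) ^ v) / (((k:ℝ) + 1 + 1) ^ v - ((k:ℝ) + 1) ^ v)
          ≤ (N:ℝ)^v / ((k:ℝ) + 1)^(v-1) :=
        div_le_div₀ (rpow_nonneg hNpos.le v) hnum_le hdpos hden_ge
      have heq : ((N:ℝ)^v / ((k:ℝ) + 1)^(v-1))^m = (N:ℝ)^(v * ((l:ℝ) - 1)) * ((k:ℝ) + 1)^(-s) := by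
        rw [div_pow, ← rpow_natCast ((N:ℝ)^v) m, ← rpow_mul hNpos.le, hmcast,
          ← rpow_natCast (((k:ℝ) + 1)^(v-1)) m, ← rpow_mul hk1pos.le, hmcast,
          div_eq_mul_inv, ← rpow_neg hk1pos.le]
      rw [← heq]
      have hdenpos2 : (0:ℝ) < ((k:ℝ) + 1 + 1)^v - ((k:ℝ) + 1)^v :=
        sub_pos.2 (rpow_lt_rpow (by positivity) (by linarith) hv0)
      exact pow_le_pow_left₀ (div_nonneg hnum_nonneg hdenpos2.le) hratio m
    have hsum_shift : ∑ k ∈ Finset.range M,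
        (((N : ℝ) ^ v - (((k+1:ℕ):ℝ) + 1) ^ v) / ((((k+1:ℕ):ℝ) + 1) ^ v - ((k+1:ℕ) : ℝ) ^ v)) ^ m
        ≤ 2/(1-s) * (N:ℝ)^l := by
      calc ∑ k ∈ Finset.range M,
          (((N : ℝ) ^ v - (((k+1:ℕ):ℝ) + 1) ^ v) / ((((k+1:ℕ):ℝ) + 1) ^ v - ((k+1:ℕ) : ℝ) ^ v)) ^ m
          ≤ ∑ k ∈ Finset.range M, (N:ℝ)^(v * ((l:ℝ) - 1)) * ((k:ℝ) + 1)^(-s) :=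
            Finset.sum_le_sum hTk
        _ = (N:ℝ)^(v * ((l:ℝ) - 1)) * ∑ k ∈ Finset.range M, ((k:ℝ) + 1)^(-s) := by
            rw [Finset.mul_sum]
        _ ≤ (N:ℝ)^(v * ((l:ℝ) - 1)) * (2/(1-s) * ((M:ℝ) + 1)^(1-s)) := by
            apply mul_le_mul_of_nonneg_left (ccs_sum_rpow s hs0 hs1 M) (rpow_nonneg hNpos.le _)
        _ = 2/(1-s) * ((N:ℝ)^(v * ((l:ℝ) - 1)) * (N:ℝ)^(1-s)) := by
            have : (M:ℝ) + 1 = (N:ℝ) := by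
              rw [← hMN]; push_cast; ring
            rw [this]; ring
        _ = 2/(1-s) * (N:ℝ)^l := by
            rw [← Real.rpow_add hNpos, show v * ((l:ℝ) - 1) + (1-s) = ((l:ℕ):ℝ) by rw [hs]; ring,
              hNlcast]
    have hone : (1:ℝ) ≤ (N:ℝ)^l := by
      calc (1:ℝ) = 1^l := (one_pow l).symm
        _ ≤ (N:ℝ)^l := pow_le_pow_left₀ zero_le_one hN1 l
    rw [hsplit]
    linarith [hf0, hsum_shift, hone]
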